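/- (Negative mutual dependence for uniform 4-colorings.) Let E be a finite set and let f:E→{a,b,c,d} be a uniformly random coloring, each element of E receiving independently a uniformly random color among the four colors. For distinct colors s,t, let E_{st}∈{0,1}^E be the indicator configuration of {e∈E : f(e)∈{s,t}}. Then for any closed-upward events U,V,W ⊆ {0,1}^E, P(E_{ab}∈U and E_{ac}∈V and E_{bc}∈W) ≤ P(E_{ab}∈U)·P(E_{ac}∈V)·P(E_{bc}∈W). -/

import Mathlib

namespace ColoredPerc

/-- The four colors. -/
inductive Color : Type
  | a | b | c | d
deriving DecidableEq

instance : Fintype Color :=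
  ⟨{Color.a, Color.b, Color.c, Color.d}, fun x => by cases x <;> simp⟩

variable {E : Type*} [Fintype E] [DecidableEq E]

/-- Probability of an event for a uniformly random coloring `f : E → Color`
(each element of `E` gets, independently, a uniformly random color). -/
noncomputable def PrCol (A : Set (E → Color)) : ℝ :=
  ∑ f : E → Color, A.indicator (fun _ => (1 / 4 : ℝ) ^ Fintype.card E) f

/-- `E_{st}`: the indicator configuration of `{e : f e ∈ {s, t}}`. -/
def Est (s t : Color) (f : E → Color) : E → Bool :=
  fun e => decide (f e = s ∨ f e = t)

/-- An event of configurations in `{0,1}^E` is closed upward if it is preserved by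
turning more coordinates to `true`. -/
def UpwardClosed (A : Set (E → Bool)) : Prop :=
  ∀ C₁ C₂ : E → Bool, C₁ ∈ A → (∀ e, C₁ e = true → C₂ e = true) → C₂ ∈ A

/-! ### Auxiliary material -/

open Finset

/-- Decode a pair of booleans into a color. -/
def pc : Bool → Bool → Color
  | true, true => .a
  | true, false => .b
  | false, true => .c
  | false, false => .d

/-- The coding of a coloring by the pair `(E_ab, E_ac)` is a bijection. -/
def colorEquiv : (E → Color) ≃ (E → Bool) × (E → Bool) where
  toFun f := (Est Color.a Color.b f, Est Color.a Color.c f)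
  invFun p := fun e => pc (p.1 e) (p.2 e)
  left_inv f := funext fun e => by cases h : f e <;> simp [Est, pc, h]
  right_inv p := by
    refine Prod.ext (funext fun e => ?_) (funext fun e => ?_) <;>
      cases h1 : p.1 e <;> cases h2 : p.2 e <;> simp [Est, pc, h1, h2]

/-- Pointwise xor of configurations. -/
def xorFun (x y : E → Bool) : E → Bool := fun e => xor (x e) (y e)

lemma xorFun_invol (x : E → Bool) : Function.Involutive (xorFun x) := by
  intro y; funext e; cases h : x e <;> simp [xorFun, h]

lemma xorFun_comm (x y : E → Bool) : xorFun x y = xorFun y x := by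
  funext e; exact Bool.xor_comm _ _

/-- Sum reindexing by xor. -/
lemma sum_xorFun {M : Type*} [AddCommMonoid M] (F : (E → Bool) → M) (x : E → Bool) :
    ∑ y : E → Bool, F (xorFun x y) = ∑ y : E → Bool, F y :=
  Equiv.sum_comp ((xorFun_invol x).toPerm _) F

lemma est_decode (p : (E → Bool) × (E → Bool)) :
    Est Color.a Color.b (colorEquiv.symm p) = p.1 ∧
    Est Color.a Color.c (colorEquiv.symm p) = p.2 ∧
    Est Color.b Color.c (colorEquiv.symm p) = xorFun p.1 p.2 := by
  refine ⟨?_, ?_, ?_⟩ <;> funext e <;>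
    cases h1 : p.1 e <;> cases h2 : p.2 e <;>
    simp [colorEquiv, Est, pc, xorFun, h1, h2]

/-- Transfer of the Harris–Kleitman inequality to configurations `E → Bool`. -/
lemma hk_bool (P Q : Finset (E → Bool))
    (hP : ∀ x ∈ P, ∀ x' : E → Bool, (∀ e, x e = true → x' e = true) → x' ∈ P)
    (hQ : ∀ x ∈ Q, ∀ x' : E → Bool, (∀ e, x' e = true → x e = true) → x' ∈ Q) :
    2 ^ Fintype.card E * (P ∩ Q).card ≤ P.card * Q.card := by
  classical
  set bs : (E → Bool) → Finset E := fun x => univ.filter (fun e => x e = true) with hbs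
  have hmem : ∀ (x : E → Bool) (e : E), e ∈ bs x ↔ x e = true := by
    intro x e; simp [hbs]
  have hinj : Function.Injective bs := by
    intro x y hxy
    funext e
    have hiff : x e = true ↔ y e = true := by rw [← hmem x e, ← hmem y e, hxy]
    cases h : x e <;> cases h' : y e <;> simp_all
  have hPU : IsUpperSet ((P.image bs : Finset (Finset E)) : Set (Finset E)) := by
    intro s t hst hs
    simp only [coe_image, Set.mem_image, mem_coe] at hs ⊢
    obtain ⟨x, hxP, hxs⟩ := hs
    refine ⟨fun e => decide (e ∈ t), hP x hxP _ fun e hxe => ?_, ?_⟩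
    · have : e ∈ s := hxs ▸ (hmem x e).2 hxe
      simpa using hst this
    · ext e; simp [hbs]
  have hQL : IsLowerSet ((Q.image bs : Finset (Finset E)) : Set (Finset E)) := by
    intro s t hst hs
    simp only [coe_image, Set.mem_image, mem_coe] at hs ⊢
    obtain ⟨x, hxQ, hxs⟩ := hs
    refine ⟨fun e => decide (e ∈ t), hQ x hxQ _ fun e hxe => ?_, ?_⟩
    · have het : e ∈ t := by simpa using hxe
      exact (hmem x e).1 (hxs ▸ hst het)
    · ext e; simp [hbs]
  have h := hPU.card_inter_le_finset hQL
  rwa [← Finset.image_inter _ _ hinj, Finset.card_image_of_injective _ hinj,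
    Finset.card_image_of_injective _ hinj, Finset.card_image_of_injective _ hinj] at h

open Classical in
/-- Characteristic function of an event. -/
noncomputable def chi (A : Set (E → Bool)) : (E → Bool) → ℕ :=
  fun x => if x ∈ A then 1 else 0

lemma chi_le_one (A : Set (E → Bool)) (x : E → Bool) : chi A x ≤ 1 := by
  unfold chi; split <;> omega

lemma chi_mono {A : Set (E → Bool)} (hA : UpwardClosed A) {x x' : E → Bool}
    (h : ∀ e, x e = true → x' e = true) : chi A x ≤ chi A x' := by
  unfold chi
  by_cases hx : x ∈ A
  · rw [if_pos hx, if_pos (hA x x' hx h)]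
  · rw [if_neg hx]; omega

/-- `g x = #{y : y ∈ V ∧ x ⊕ y ∈ W}`. -/
noncomputable def gVW (V W : Set (E → Bool)) (x : E → Bool) : ℕ :=
  ∑ y : E → Bool, chi V y * chi W (xorFun x y)

/-- Two-point rearrangement inequality. -/
lemma rearrange {a b c d : ℕ} (hab : a ≤ b) (hcd : c ≤ d) :
    a * d + b * c ≤ a * c + b * d := by
  obtain ⟨k, rfl⟩ := Nat.exists_eq_add_of_le hab
  obtain ⟨l, rfl⟩ := Nat.exists_eq_add_of_le hcd
  ring_nf
  nlinarith

lemma gVW_flip {V W : Set (E → Bool)} (hV : UpwardClosed V) (hW : UpwardClosed W)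
    (x : E → Bool) (e : E) : gVW V W (Function.update x e true) ≤ gVW V W x := by
  classical
  by_cases hxe : x e = true
  · have hx : Function.update x e true = x := by rw [← hxe]; exact Function.update_eq_self e x
    rw [hx]
  · have hxe' : x e = false := by simpa using hxe
    set x' := Function.update x e true with hx'
    have hτinv : Function.Involutive (fun y : E → Bool => Function.update y e (!(y e))) := by
      intro y; funext e'
      rcases eq_or_ne e' e with rfl | h
      · simp
      · simp [Function.update_of_ne h]
    set τ : Equiv.Perm (E → Bool) := hτinv.toPerm _ with hτ
    have hτapp : ∀ y : E → Bool, τ y = Function.update y e (!(y e)) := fun y => rfl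
    set T : (E → Bool) → (E → Bool) → ℕ := fun x y => chi V y * chi W (xorFun x y) with hT
    have key : ∀ y : E → Bool, T x' y + T x' (τ y) ≤ T x y + T x (τ y) := by
      intro y
      set y0 := Function.update y e false with hy0
      set y1 := Function.update y e true with hy1
      set z0 := Function.update (xorFun x y) e false with hz0
      set z1 := Function.update (xorFun x y) e true with hz1
      have hxy0 : xorFun x y0 = z0 := by
        funext e'; rcases eq_or_ne e' e with rfl | h
        · simp [xorFun, hy0, hz0, hxe']
        · simp [xorFun, hy0, hz0, Function.update_of_ne h]
      have hxy1 : xorFun x y1 = z1 := by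
        funext e'; rcases eq_or_ne e' e with rfl | h
        · simp [xorFun, hy1, hz1, hxe']
        · simp [xorFun, hy1, hz1, Function.update_of_ne h]
      have hx'y0 : xorFun x' y0 = z1 := by
        funext e'; rcases eq_or_ne e' e with rfl | h
        · simp [xorFun, hx', hy0, hz1]
        · simp [xorFun, hx', hy0, hz1, Function.update_of_ne h]
      have hx'y1 : xorFun x' y1 = z0 := by
        funext e'; rcases eq_or_ne e' e with rfl | h
        · simp [xorFun, hx', hy1, hz0]
        · simp [xorFun, hx', hy1, hz0, Function.update_of_ne h]
      have hy01 : chi V y0 ≤ chi V y1 := by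
        apply chi_mono hV
        intro e' he'
        rcases eq_or_ne e' e with rfl | h
        · simp [hy1]
        · rw [hy1, Function.update_of_ne h]
          rw [hy0, Function.update_of_ne h] at he'
          exact he'
      have hz01 : chi W z0 ≤ chi W z1 := by
        apply chi_mono hW
        intro e' he'
        rcases eq_or_ne e' e with rfl | h
        · simp [hz1]
        · rw [hz1, Function.update_of_ne h]
          rw [hz0, Function.update_of_ne h] at he'
          exact he'
      have hcore : T x' y0 + T x' y1 ≤ T x y0 + T x y1 := by
        rw [hT]
        simp only [hxy0, hxy1, hx'y0, hx'y1]
        have := rearrange hy01 hz01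
        omega
      cases hye : y e
      · have h0 : y0 = y := by rw [hy0, ← hye]; exact Function.update_eq_self e y
        have h1 : τ y = y1 := by rw [hτapp, hye]; simp [hy1]
        rw [h1, ← h0]; exact hcore
      · have h1 : y1 = y := by rw [hy1, ← hye]; exact Function.update_eq_self e y
        have h0 : τ y = y0 := by rw [hτapp, hye]; simp [hy0]
        rw [h0, ← h1]
        omega
    have hsum : ∀ z : E → Bool, ∑ y : E → Bool, T z (τ y) = ∑ y : E → Bool, T z y :=
      fun z => Equiv.sum_comp τ (T z)
    have h2 : 2 * gVW V W x' ≤ 2 * gVW V W x := by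
      have e1 : 2 * gVW V W x' = ∑ y : E → Bool, (T x' y + T x' (τ y)) := by
        rw [Finset.sum_add_distrib, hsum x', two_mul]; rfl
      have e2 : 2 * gVW V W x = ∑ y : E → Bool, (T x y + T x (τ y)) := by
        rw [Finset.sum_add_distrib, hsum x, two_mul]; rfl
      rw [e1, e2]
      exact Finset.sum_le_sum fun y _ => key y
    omega

lemma gVW_anti {V W : Set (E → Bool)} (hV : UpwardClosed V) (hW : UpwardClosed W)
    {x x' : E → Bool} (h : ∀ e, x e = true → x' e = true) : gVW V W x' ≤ gVW V W x := by
  classical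
  have key : ∀ s : Finset E, ∀ x x' : E → Bool, (∀ e, x e = true → x' e = true) →
      (∀ e, x e ≠ x' e → e ∈ s) → gVW V W x' ≤ gVW V W x := by
    intro s
    induction s using Finset.induction_on with
    | empty =>
      intro x x' _ hd
      have hxx : x = x' := funext fun e => by
        by_contra hc; exact absurd (hd e hc) (Finset.notMem_empty e)
      rw [hxx]
    | @insert e s he ih =>
      intro x x' hle hd
      by_cases hxe : x e = x' e
      · refine ih x x' hle fun e' h' => ?_
        rcases Finset.mem_insert.1 (hd e' h') with rfl | hmem
        · exact absurd hxe h'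
        · exact hmem
      · have hxe0 : x e = false := by
          cases h' : x e
          · rfl
          · exact absurd (h'.trans (hle e h').symm) hxe
        have hx'e : x' e = true := by
          cases h' : x' e
          · exact absurd (hxe0.trans h'.symm) hxe
          · rfl
        set x'' := Function.update x e true with hx''
        have h1 : gVW V W x'' ≤ gVW V W x := gVW_flip hV hW x e
        have h2 : gVW V W x' ≤ gVW V W x'' := by
          apply ih x'' x'
          · intro e' he'
            rcases eq_or_ne e' e with rfl | hne
            · exact hx'e
            · refine hle e' ?_
              rwa [hx'', Function.update_of_ne hne] at he'
          · intro e' he'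
            rcases eq_or_ne e' e with rfl | hne
            · exact absurd (by rw [hx'']; simp [hx'e]) he'
            · have hne' : x e' ≠ x' e' := by
                rwa [hx'', Function.update_of_ne hne] at he'
              rcases Finset.mem_insert.1 (hd e' hne') with rfl | hmem
              · exact absurd rfl hne
              · exact hmem
        exact le_trans h2 h1
  exact key univ x x' h fun e _ => Finset.mem_univ e

lemma sum_gVW (V W : Set (E → Bool)) :
    ∑ x : E → Bool, gVW V W x = (∑ y : E → Bool, chi V y) * (∑ z : E → Bool, chi W z) := by
  unfold gVW
  rw [Finset.sum_comm]
  rw [Finset.sum_mul]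
  refine Finset.sum_congr rfl fun y _ => ?_
  rw [← Finset.mul_sum]
  congr 1
  calc ∑ x : E → Bool, chi W (xorFun x y) = ∑ x : E → Bool, chi W (xorFun y x) := by
        refine Finset.sum_congr rfl fun x _ => by rw [xorFun_comm]
    _ = ∑ z : E → Bool, chi W z := sum_xorFun (chi W) y

/-- The Harris-type inequality for the weight `g`. -/
lemma harris_g {U V W : Set (E → Bool)} (hU : UpwardClosed U) (hV : UpwardClosed V)
    (hW : UpwardClosed W) :
    2 ^ Fintype.card E * ∑ x : E → Bool, chi U x * gVW V W x
      ≤ (∑ x : E → Bool, chi U x) * ((∑ y : E → Bool, chi V y) * (∑ z : E → Bool, chi W z)) := by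
  classical
  set n := Fintype.card E with hn
  set M := 2 ^ n with hM
  have hgle : ∀ x : E → Bool, gVW V W x ≤ M := by
    intro x
    calc gVW V W x ≤ ∑ _y : E → Bool, 1 :=
          Finset.sum_le_sum fun y _ =>
            le_trans (Nat.mul_le_mul (chi_le_one V y) (chi_le_one W _)) (by norm_num)
      _ = Fintype.card (E → Bool) := by rw [Finset.sum_const, Finset.card_univ, smul_eq_mul, mul_one]
      _ = M := by rw [Fintype.card_fun, Fintype.card_bool]
  have hrange : ∀ t, t ≤ M → ∑ k ∈ Finset.range M, (if k < t then 1 else 0) = t := by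
    intro t ht
    rw [← Finset.card_filter]
    have hfil : (Finset.range M).filter (fun k => k < t) = Finset.range t := by
      ext k; simp only [Finset.mem_filter, Finset.mem_range]; omega
    rw [hfil, Finset.card_range]
  have hA : ∑ x : E → Bool, chi U x * gVW V W x
      = ∑ k ∈ Finset.range M, (univ.filter (fun x : E → Bool => x ∈ U ∧ k < gVW V W x)).card := by
    have hx : ∀ x : E → Bool, chi U x * gVW V W x
        = ∑ k ∈ Finset.range M, (if x ∈ U ∧ k < gVW V W x then 1 else 0) := by
      intro x
      have : ∀ k, (if x ∈ U ∧ k < gVW V W x then 1 else 0)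
          = chi U x * (if k < gVW V W x then 1 else 0) := by
        intro k; unfold chi
        by_cases h1 : x ∈ U <;> by_cases h2 : k < gVW V W x <;> simp [h1, h2]
      rw [Finset.sum_congr rfl fun k _ => this k, ← Finset.mul_sum, hrange _ (hgle x)]
    rw [Finset.sum_congr rfl fun x _ => hx x, Finset.sum_comm]
    exact Finset.sum_congr rfl fun k _ => (Finset.card_filter _ _).symm
  have hB : ∑ x : E → Bool, gVW V W x
      = ∑ k ∈ Finset.range M, (univ.filter (fun x : E → Bool => k < gVW V W x)).card := by
    have hx : ∀ x : E → Bool, gVW V W x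
        = ∑ k ∈ Finset.range M, (if k < gVW V W x then 1 else 0) :=
      fun x => (hrange _ (hgle x)).symm
    rw [Finset.sum_congr rfl fun x _ => hx x, Finset.sum_comm]
    exact Finset.sum_congr rfl fun k _ => (Finset.card_filter _ _).symm
  have hcntU : ∑ x : E → Bool, chi U x = (univ.filter (· ∈ U)).card := by
    rw [Finset.card_filter]; rfl
  have hHK : ∀ k, 2 ^ n * (univ.filter (fun x : E → Bool => x ∈ U ∧ k < gVW V W x)).card
      ≤ (univ.filter (· ∈ U)).card * (univ.filter (fun x : E → Bool => k < gVW V W x)).card := by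
    intro k
    have hfil : univ.filter (fun x : E → Bool => x ∈ U ∧ k < gVW V W x)
        = univ.filter (· ∈ U) ∩ univ.filter (fun x : E → Bool => k < gVW V W x) := by
      rw [← Finset.filter_and]
    rw [hfil, hn]
    apply hk_bool
    · intro x hx x' hle
      simp only [Finset.mem_filter, Finset.mem_univ, true_and] at hx ⊢
      exact hU x x' hx hle
    · intro x hx x' hle
      simp only [Finset.mem_filter, Finset.mem_univ, true_and] at hx ⊢
      exact lt_of_lt_of_le hx (gVW_anti hV hW hle)
  calc 2 ^ n * ∑ x : E → Bool, chi U x * gVW V W x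
      = ∑ k ∈ Finset.range M,
          2 ^ n * (univ.filter (fun x : E → Bool => x ∈ U ∧ k < gVW V W x)).card := by
        rw [hA, Finset.mul_sum]
    _ ≤ ∑ k ∈ Finset.range M,
          (univ.filter (· ∈ U)).card * (univ.filter (fun x : E → Bool => k < gVW V W x)).card :=
        Finset.sum_le_sum fun k _ => hHK k
    _ = (univ.filter (· ∈ U)).card * ∑ k ∈ Finset.range M,
          (univ.filter (fun x : E → Bool => k < gVW V W x)).card := by rw [Finset.mul_sum]
    _ = (∑ x : E → Bool, chi U x) * ∑ x : E → Bool, gVW V W x := by rw [hB, hcntU]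
    _ = (∑ x : E → Bool, chi U x) * ((∑ y : E → Bool, chi V y) * (∑ z : E → Bool, chi W z)) := by
        rw [sum_gVW]

open Classical in
lemma card_color (P : (E → Color) → Prop) :
    (univ.filter P).card
      = ∑ p : (E → Bool) × (E → Bool), if P (colorEquiv.symm p) then 1 else 0 := by
  rw [Finset.card_filter]
  exact Fintype.sum_equiv colorEquiv _ _ fun f => by rw [Equiv.symm_apply_apply]

/-- Negative mutual dependence for uniform 4-colorings:
`P(E_{ab}∈U, E_{ac}∈V, E_{bc}∈W) ≤ P(E_{ab}∈U)·P(E_{ac}∈V)·P(E_{bc}∈W)`. -/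
theorem negative_mutual_dependence
    (U V W : Set (E → Bool))
    (hU : UpwardClosed U) (hV : UpwardClosed V) (hW : UpwardClosed W) :
    PrCol {f : E → Color | Est Color.a Color.b f ∈ U ∧ Est Color.a Color.c f ∈ V ∧
                           Est Color.b Color.c f ∈ W}
      ≤ PrCol {f : E → Color | Est Color.a Color.b f ∈ U}
        * PrCol {f : E → Color | Est Color.a Color.c f ∈ V}
        * PrCol {f : E → Color | Est Color.b Color.c f ∈ W} := by
  classical
  set n := Fintype.card E with hn
  have hpair : Fintype.card (E → Bool) = 2 ^ n := by
    rw [Fintype.card_fun, Fintype.card_bool]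
  have hPr : ∀ A : Set (E → Color),
      PrCol A = ((univ.filter (· ∈ A)).card : ℝ) * (1 / 4 : ℝ) ^ n := by
    intro A
    rw [PrCol, ← hn]
    rw [show (∑ f : E → Color, A.indicator (fun _ => (1 / 4 : ℝ) ^ n) f)
        = ∑ f ∈ univ.filter (· ∈ A), (1 / 4 : ℝ) ^ n by
      rw [Finset.sum_filter]
      exact Finset.sum_congr rfl fun f _ => by
        by_cases h : f ∈ A <;> simp [Set.indicator_apply, h]]
    rw [Finset.sum_const, nsmul_eq_mul]
  -- the four cardinalities
  have hm1 : ∀ A : Set (E → Color), A = {f : E → Color | Est Color.a Color.b f ∈ U} →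
      (univ.filter (· ∈ A)).card = (∑ x : E → Bool, chi U x) * 2 ^ n := by
    rintro A rfl
    rw [card_color, Fintype.sum_prod_type]
    rw [show (∑ x : E → Bool, ∑ y : E → Bool,
          if colorEquiv.symm (x, y) ∈ {f : E → Color | Est Color.a Color.b f ∈ U}
            then 1 else 0) = ∑ x : E → Bool, chi U x * 2 ^ n from
      Finset.sum_congr rfl fun x _ => by
        rw [show (∑ y : E → Bool,
            if colorEquiv.symm (x, y) ∈ {f : E → Color | Est Color.a Color.b f ∈ U}
              then 1 else 0) = ∑ _y : E → Bool, chi U x from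
          Finset.sum_congr rfl fun y _ => by
            simp only [Set.mem_setOf_eq, (est_decode (x, y)).1]
            by_cases h : x ∈ U <;> simp [chi, h]]
        rw [Finset.sum_const, Finset.card_univ, hpair, smul_eq_mul, mul_comm]]
    rw [← Finset.sum_mul]
  have hm2 : ∀ A : Set (E → Color), A = {f : E → Color | Est Color.a Color.c f ∈ V} →
      (univ.filter (· ∈ A)).card = (∑ y : E → Bool, chi V y) * 2 ^ n := by
    rintro A rfl
    rw [card_color, Fintype.sum_prod_type]
    rw [show (∑ x : E → Bool, ∑ y : E → Bool,
          if colorEquiv.symm (x, y) ∈ {f : E → Color | Est Color.a Color.c f ∈ V}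
            then 1 else 0) = ∑ _x : E → Bool, ∑ y : E → Bool, chi V y from
      Finset.sum_congr rfl fun x _ => Finset.sum_congr rfl fun y _ => by
        simp only [Set.mem_setOf_eq, (est_decode (x, y)).2.1]
        by_cases h : y ∈ V <;> simp [chi, h]]
    rw [Finset.sum_const, Finset.card_univ, hpair, smul_eq_mul, mul_comm]
  have hm3 : ∀ A : Set (E → Color), A = {f : E → Color | Est Color.b Color.c f ∈ W} →
      (univ.filter (· ∈ A)).card = (∑ z : E → Bool, chi W z) * 2 ^ n := by
    rintro A rfl
    rw [card_color, Fintype.sum_prod_type]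
    rw [show (∑ x : E → Bool, ∑ y : E → Bool,
          if colorEquiv.symm (x, y) ∈ {f : E → Color | Est Color.b Color.c f ∈ W}
            then 1 else 0) = ∑ x : E → Bool, ∑ y : E → Bool, chi W (xorFun x y) from
      Finset.sum_congr rfl fun x _ => Finset.sum_congr rfl fun y _ => by
        simp only [Set.mem_setOf_eq, (est_decode (x, y)).2.2]
        by_cases h : xorFun x y ∈ W <;> simp [chi, h]]
    rw [show (∑ x : E → Bool, ∑ y : E → Bool, chi W (xorFun x y))
        = ∑ _x : E → Bool, ∑ z : E → Bool, chi W z from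
      Finset.sum_congr rfl fun x _ => sum_xorFun (chi W) x]
    rw [Finset.sum_const, Finset.card_univ, hpair, smul_eq_mul, mul_comm]
  have hbig : ∀ A : Set (E → Color),
      A = {f : E → Color | Est Color.a Color.b f ∈ U ∧ Est Color.a Color.c f ∈ V ∧
               Est Color.b Color.c f ∈ W} →
      (univ.filter (· ∈ A)).card = ∑ x : E → Bool, chi U x * gVW V W x := by
    rintro A rfl
    rw [card_color, Fintype.sum_prod_type]
    refine Finset.sum_congr rfl fun x _ => ?_
    unfold gVW
    rw [Finset.mul_sum]
    refine Finset.sum_congr rfl fun y _ => ?_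
    simp only [Set.mem_setOf_eq, (est_decode (x, y)).1, (est_decode (x, y)).2.1,
      (est_decode (x, y)).2.2]
    by_cases h1 : x ∈ U <;> by_cases h2 : y ∈ V <;> by_cases h3 : xorFun x y ∈ W <;>
      simp [chi, h1, h2, h3]
  rw [hPr, hPr, hPr, hPr, hbig _ rfl, hm1 _ rfl, hm2 _ rfl, hm3 _ rfl]
  have e2 : (2 : ℝ) ^ n * (1 / 4 : ℝ) ^ n = (1 / 2 : ℝ) ^ n := by
    rw [← mul_pow]; norm_num
  have e3 : ((1 / 2 : ℝ)) ^ n * (1 / 2 : ℝ) ^ n * (1 / 2 : ℝ) ^ n = (1 / 8 : ℝ) ^ n := by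
    rw [← mul_pow, ← mul_pow]; norm_num
  have e1 : (1 / 4 : ℝ) ^ n = 2 ^ n * (1 / 8 : ℝ) ^ n := by
    rw [← mul_pow]; norm_num
  have hgrind : ∀ a b c : ℝ, a * (b * c) * ((1 : ℝ) / 8) ^ n
      = a * 2 ^ n * (1 / 4) ^ n * (b * 2 ^ n * (1 / 4) ^ n) * (c * 2 ^ n * (1 / 4) ^ n) := by
    intro a b c
    calc a * (b * c) * ((1 : ℝ) / 8) ^ n
        = a * (b * c) * ((1 / 2 : ℝ) ^ n * (1 / 2 : ℝ) ^ n * (1 / 2 : ℝ) ^ n) := by rw [e3]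
      _ = _ := by rw [← e2]; ring
  calc ((∑ x : E → Bool, chi U x * gVW V W x : ℕ) : ℝ) * (1 / 4 : ℝ) ^ n
      = ((2 ^ n * ∑ x : E → Bool, chi U x * gVW V W x : ℕ) : ℝ) * (1 / 8 : ℝ) ^ n := by
        rw [Nat.cast_mul, Nat.cast_pow, Nat.cast_ofNat, e1]; ring
    _ ≤ (((∑ x : E → Bool, chi U x) * ((∑ y : E → Bool, chi V y) * (∑ z : E → Bool, chi W z))
          : ℕ) : ℝ) * (1 / 8 : ℝ) ^ n := by
        apply mul_le_mul_of_nonneg_right _ (by positivity)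
        exact_mod_cast harris_g hU hV hW
    _ = _ := by
        push_cast
        linear_combination hgrind (∑ x : E → Bool, ((chi U x : ℕ) : ℝ))
          (∑ y : E → Bool, ((chi V y : ℕ) : ℝ)) (∑ z : E → Bool, ((chi W z : ℕ) : ℝ))

end ColoredPerc
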